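/- Given an accumulating collision datum, for every index i with 1 ≤ i ≤ a+1 one has lim_{t → t₀⁻} v_i(t) = 0 and lim_{t → t₀⁻} q_i(t) = 0. -/

import Mathlib

open Matrix Filter Set

/-- The collision matrix `R_i` acting on coordinates `i` and `i+1` (0-based),
with 2×2 block `((γ, 1−γ), (1+γ, −γ))`, and agreeing with the identity elsewhere. -/
def collMat (n : ℕ) (i : ℕ) (γ : ℝ) : Matrix (Fin n) (Fin n) ℝ :=
  Matrix.of fun j k =>
    if j.val = i ∧ k.val = i then γ
    else if j.val = i ∧ k.val = i + 1 then 1 - γ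
    else if j.val = i + 1 ∧ k.val = i then 1 + γ
    else if j.val = i + 1 ∧ k.val = i + 1 then -γ
    else if j = k then 1 else 0

/-- An accumulating collision datum for the falling-ball system with `n ≥ 2` particles of
positive masses `m`: a time `t₀ > 0`, a strictly increasing sequence of collision times
`0 < t_1 < t_2 < ⋯ < t₀` with `t_k → t₀`, an index `a ≤ n − 1` with collision types
`ty k ∈ {0, 1, …, a}` such that every value in `{0, …, a}` occurs infinitely often
(here `ty k = 0` is a floor collision and `ty k = i + 1` is a collision of the 0-based
particles `i` and `i + 1`), a bound `C > 0`, and functions `q, v : [0, t₀) → ℝⁿ`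
satisfying conditions (a)–(e) of the paper.  The field `vminus k` records the left limit
`v(t_k⁻)`. -/
structure AccumDatum (n : ℕ) (m : Fin n → ℝ) : Type where
  hn : 2 ≤ n
  hm : ∀ j, 0 < m j
  t0 : ℝ
  t0_pos : 0 < t0
  /-- collision times (0-indexed: `tc 0` is the paper's `t_1`) -/
  tc : ℕ → ℝ
  tc_pos : 0 < tc 0
  tc_mono : StrictMono tc
  tc_lt : ∀ k, tc k < t0
  tc_lim : Tendsto tc atTop (nhds t0)
  a : ℕ
  ha : a ≤ n - 1
  /-- collision types -/
  ty : ℕ → ℕ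
  ty_le : ∀ k, ty k ≤ a
  /-- every value in `{0, …, a}` is attained by `ty` infinitely often -/
  ty_inf : ∀ i, i ≤ a → ∀ K : ℕ, ∃ k, K ≤ k ∧ ty k = i
  C : ℝ
  C_pos : 0 < C
  q : ℝ → Fin n → ℝ
  v : ℝ → Fin n → ℝ
  /-- the left limit `v(t_k⁻)` -/
  vminus : ℕ → Fin n → ℝ
  /-- (a) `q` is continuous on `[0, t₀)` -/
  q_cont : ∀ j, ContinuousOn (fun t => q t j) (Ico 0 t0)
  /-- (a) `0 ≤ q_1(t) ≤ q_2(t) ≤ ⋯ ≤ q_n(t)` -/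
  q_nonneg : ∀ t, 0 ≤ t → t < t0 → 0 ≤ q t ⟨0, by omega⟩
  q_mono : ∀ t, 0 ≤ t → t < t0 → ∀ j j' : Fin n, j ≤ j' → q t j ≤ q t j'
  /-- (a) `|v_j(t)| ≤ C` -/
  v_bdd : ∀ t, 0 ≤ t → t < t0 → ∀ j, |v t j| ≤ C
  /-- (b) between collisions, `q' = v` -/
  q_deriv : ∀ t, 0 ≤ t → t < t0 → t ∉ range tc → ∀ j,
    HasDerivWithinAt (fun s => q s j) (v t j) (Ico 0 t0) t
  /-- (b) between collisions, `v' = -1` componentwise -/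
  v_deriv : ∀ t, 0 ≤ t → t < t0 → t ∉ range tc → ∀ j,
    HasDerivWithinAt (fun s => v s j) (-1) (Ico 0 t0) t
  /-- (c) `v` is right-continuous -/
  v_rc : ∀ t, 0 ≤ t → t < t0 → ∀ j,
    Tendsto (fun s => v s j) (nhdsWithin t (Ici t)) (nhds (v t j))
  /-- (c) `v` has left limit `vminus k` at `tc k` -/
  v_ll : ∀ k j, Tendsto (fun s => v s j) (nhdsWithin (tc k) (Iio (tc k))) (nhds (vminus k j))
  /-- (d) collision of particles `i`, `i+1` (0-based): `q_i = q_{i+1}`,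
  `v_i(t_k⁻) > v_{i+1}(t_k⁻)` and `v⁺ = R_i v⁻` -/
  coll_pair : ∀ k, ∀ i : ℕ, ∀ hi : i + 1 < n, ty k = i + 1 →
    q (tc k) ⟨i, Nat.lt_of_succ_lt hi⟩ = q (tc k) ⟨i + 1, hi⟩ ∧
    vminus k ⟨i, Nat.lt_of_succ_lt hi⟩ > vminus k ⟨i + 1, hi⟩ ∧
    v (tc k) = (collMat n i ((m ⟨i, Nat.lt_of_succ_lt hi⟩ - m ⟨i + 1, hi⟩) /
        (m ⟨i, Nat.lt_of_succ_lt hi⟩ + m ⟨i + 1, hi⟩))) *ᵥ vminus k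
  /-- (e) floor collision: `q_1 = 0`, `v_1(t_k⁻) < 0`, `v_1⁺ = -v_1⁻`, and the other
  velocities are unchanged -/
  coll_floor : ∀ k, ty k = 0 →
    q (tc k) ⟨0, by omega⟩ = 0 ∧
    vminus k ⟨0, by omega⟩ < 0 ∧
    v (tc k) ⟨0, by omega⟩ = -vminus k ⟨0, by omega⟩ ∧
    ∀ j : Fin n, j ≠ ⟨0, by omega⟩ → v (tc k) j = vminus k j

namespace AccumDatum

variable {n : ℕ} {m : Fin n → ℝ} (D : AccumDatum n m)

lemma tc_pos' (k : ℕ) : 0 < D.tc k :=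
  lt_of_lt_of_le D.tc_pos (D.tc_mono.monotone (Nat.zero_le k))

lemma tc_nonneg (k : ℕ) : 0 ≤ D.tc k := (D.tc_pos' k).le

/-- On a collision-free interval, each velocity decreases linearly. -/
lemma v_linear {s t : ℝ} (hs : 0 ≤ s) (hst : s ≤ t) (ht : t < D.t0)
    (hfree : ∀ k, D.tc k ≤ s ∨ t < D.tc k) (j : Fin n) :
    D.v t j = D.v s j - (t - s) := by
  rcases eq_or_lt_of_le hst with rfl | hlt
  · ring_nf
  -- every point of (s, t] is a non-collision point in (0, t0)
  have hnc : ∀ x : ℝ, s < x → x ≤ t → x ∉ range D.tc := by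
    intro x hx1 hx2 hx
    rcases hx with ⟨k, rfl⟩
    rcases hfree k with h | h
    · exact absurd hx1 (not_lt.mpr h)
    · exact absurd hx2 (not_le.mpr h)
  have hDA : ∀ x : ℝ, s < x → x ≤ t → HasDerivAt (fun s' => D.v s' j) (-1) x := by
    intro x hx1 hx2
    have hx0 : 0 ≤ x := le_trans hs hx1.le
    have hxt : x < D.t0 := lt_of_le_of_lt hx2 ht
    have := D.v_deriv x hx0 hxt (hnc x hx1 hx2) j
    refine this.hasDerivAt ?_
    have : Ioo (0:ℝ) D.t0 ∈ nhds x := by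
      refine IsOpen.mem_nhds isOpen_Ioo ⟨lt_of_le_of_lt hs hx1, hxt⟩
    exact Filter.mem_of_superset this Ioo_subset_Ico_self
  -- the function v + id is constant on (s, t]
  have key : ∀ s' : ℝ, s < s' → s' ≤ t → D.v s' j + s' = D.v t j + t := by
    intro s' h1 h2
    have hcont : ContinuousOn (fun x => D.v x j + x) (Icc s' t) := by
      intro x hx
      exact (((hDA x (lt_of_lt_of_le h1 hx.1) hx.2).continuousAt).add
        continuous_id.continuousAt).continuousWithinAt
    have hderiv : ∀ x ∈ Ico s' t, HasDerivWithinAt (fun x => D.v x j + x) 0 (Ici x) x := by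
      intro x hx
      have := (hDA x (lt_of_lt_of_le h1 hx.1) hx.2.le).add (hasDerivAt_id x)
      exact this.hasDerivWithinAt.congr_deriv (by norm_num)
    have := constant_of_has_deriv_right_zero hcont hderiv t ⟨h2, le_refl t⟩
    linarith [this]
  -- take the limit s' → s⁺, using right-continuity of v
  have hne : (nhdsWithin s (Ioi s)).NeBot := nhdsGT_neBot s
  have lim1 : Tendsto (fun s' => D.v s' j + s') (nhdsWithin s (Ioi s)) (nhds (D.v s j + s)) := by
    exact ((D.v_rc s hs (lt_of_le_of_lt hst ht) j).mono_left
      (nhdsWithin_mono s Ioi_subset_Ici_self)).add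
      ((continuous_id.tendsto s).mono_left nhdsWithin_le_nhds)
  have lim2 : Tendsto (fun s' => D.v s' j + s') (nhdsWithin s (Ioi s)) (nhds (D.v t j + t)) := by
    refine Tendsto.congr' ?_ tendsto_const_nhds
    filter_upwards [Ioc_mem_nhdsGT_of_mem ⟨le_refl s, hlt⟩] with x hx
    exact (key x hx.1 hx.2).symm
  have := tendsto_nhds_unique lim1 lim2
  linarith [this]

/-- Left limits via the linear law. -/
lemma vminus_eq {s : ℝ} {k : ℕ} (hs : 0 ≤ s) (hst : s < D.tc k)
    (hfree : ∀ k', D.tc k' ≤ s ∨ D.tc k ≤ D.tc k') (j : Fin n) :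
    D.vminus k j = D.v s j - (D.tc k - s) := by
  have hne : (nhdsWithin (D.tc k) (Iio (D.tc k))).NeBot := nhdsLT_neBot _
  have lim1 := D.v_ll k j
  have lim2 : Tendsto (fun t' => D.v t' j) (nhdsWithin (D.tc k) (Iio (D.tc k)))
      (nhds (D.v s j - (D.tc k - s))) := by
    have hsub : Tendsto (fun t' : ℝ => D.v s j - (t' - s)) (nhdsWithin (D.tc k) (Iio (D.tc k)))
        (nhds (D.v s j - (D.tc k - s))) := by
      refine Tendsto.sub tendsto_const_nhds (Tendsto.sub ?_ tendsto_const_nhds)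
      exact (continuous_id.tendsto _).mono_left nhdsWithin_le_nhds
    refine Tendsto.congr' ?_ hsub
    filter_upwards [Ioo_mem_nhdsLT_of_mem ⟨hst, le_refl _⟩] with x hx
    refine (D.v_linear hs hx.1.le (lt_trans hx.2 (D.tc_lt k)) ?_ j).symm
    intro k'
    rcases hfree k' with h | h
    · exact Or.inl h
    · exact Or.inr (lt_of_lt_of_le hx.2 h)
  exact tendsto_nhds_unique lim1 lim2

lemma vminus_succ (k : ℕ) (j : Fin n) :
    D.vminus (k+1) j = D.v (D.tc k) j - (D.tc (k+1) - D.tc k) := by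
  refine D.vminus_eq (D.tc_nonneg k) (D.tc_mono (Nat.lt_succ_self k)) ?_ j
  intro k'
  rcases le_or_gt k' k with h | h
  · exact Or.inl (D.tc_mono.monotone h)
  · exact Or.inr (D.tc_mono.monotone h)

lemma vminus_bdd (k : ℕ) (j : Fin n) : |D.vminus k j| ≤ D.C := by
  have hne : (nhdsWithin (D.tc k) (Iio (D.tc k))).NeBot := nhdsLT_neBot _
  have lim : Tendsto (fun s => |D.v s j|) (nhdsWithin (D.tc k) (Iio (D.tc k)))
      (nhds |D.vminus k j|) := (D.v_ll k j).abs
  refine le_of_tendsto lim ?_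
  filter_upwards [Ioo_mem_nhdsLT_of_mem ⟨D.tc_pos' k, le_refl _⟩] with x hx
  exact D.v_bdd x hx.1.le (lt_trans hx.2 (D.tc_lt k)) j

end AccumDatum

section collMatLemmas

lemma sum_two {α} [Fintype α] [DecidableEq α] (f : α → ℝ) (a b : α) (hab : a ≠ b)
    (h : ∀ c, c ≠ a → c ≠ b → f c = 0) : ∑ c, f c = f a + f b := by
  rw [← Finset.sum_pair hab]
  refine (Finset.sum_subset (Finset.subset_univ _) ?_).symm
  intro x _ hx
  simp only [Finset.mem_insert, Finset.mem_singleton, not_or] at hx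
  exact h x hx.1 hx.2

lemma collMat_aa {n i : ℕ} (γ : ℝ) (h : i < n) :
    collMat n i γ ⟨i, h⟩ ⟨i, h⟩ = γ := by simp [collMat]
lemma collMat_ab {n i : ℕ} (γ : ℝ) (h : i < n) (h2 : i + 1 < n) :
    collMat n i γ ⟨i, h⟩ ⟨i+1, h2⟩ = 1 - γ := by simp [collMat]
lemma collMat_ba {n i : ℕ} (γ : ℝ) (h : i < n) (h2 : i + 1 < n) :
    collMat n i γ ⟨i+1, h2⟩ ⟨i, h⟩ = 1 + γ := by simp [collMat]
lemma collMat_bb {n i : ℕ} (γ : ℝ) (h2 : i + 1 < n) :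
    collMat n i γ ⟨i+1, h2⟩ ⟨i+1, h2⟩ = -γ := by simp [collMat]
lemma collMat_other_row {n i : ℕ} (γ : ℝ) (j k : Fin n) (hj : j.val ≠ i) (hj' : j.val ≠ i + 1) :
    collMat n i γ j k = if j = k then 1 else 0 := by simp [collMat, hj, hj']
lemma collMat_a_other {n i : ℕ} (γ : ℝ) (h : i < n) (k : Fin n) (hk : k.val ≠ i)
    (hk' : k.val ≠ i + 1) : collMat n i γ ⟨i, h⟩ k = 0 := by
  simp [collMat, hk, hk']
  intro hh; exact absurd (congrArg Fin.val hh).symm hk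
lemma collMat_b_other {n i : ℕ} (γ : ℝ) (h2 : i + 1 < n) (k : Fin n) (hk : k.val ≠ i)
    (hk' : k.val ≠ i + 1) : collMat n i γ ⟨i+1, h2⟩ k = 0 := by
  simp [collMat, hk, hk']
  intro hh; exact absurd (congrArg Fin.val hh).symm hk'

lemma collMat_mulVec {n i : ℕ} (γ : ℝ) (hi : i + 1 < n) (w : Fin n → ℝ) (j : Fin n) :
    (collMat n i γ *ᵥ w) j =
      if j.val = i then γ * w ⟨i, Nat.lt_of_succ_lt hi⟩ + (1 - γ) * w ⟨i+1, hi⟩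
      else if j.val = i + 1 then (1 + γ) * w ⟨i, Nat.lt_of_succ_lt hi⟩ - γ * w ⟨i+1, hi⟩
      else w j := by
  have hii : i < n := Nat.lt_of_succ_lt hi
  set a : Fin n := ⟨i, hii⟩ with ha
  set b : Fin n := ⟨i+1, hi⟩ with hb
  have hab : a ≠ b := by
    intro h; exact absurd (congrArg Fin.val h) (by simp [ha, hb])
  show ∑ k, collMat n i γ j k * w k = _
  by_cases hji : j.val = i
  · have hja : j = a := Fin.ext hji
    subst hja
    rw [if_pos hji]
    rw [sum_two (fun k => collMat n i γ a k * w k) a b hab ?_]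
    · rw [show collMat n i γ a a = γ from collMat_aa γ hii,
        show collMat n i γ a b = 1 - γ from collMat_ab γ hii hi]
    · intro c hca hcb
      have h1 : c.val ≠ i := fun h => hca (Fin.ext h)
      have h2 : c.val ≠ i + 1 := fun h => hcb (Fin.ext h)
      show collMat n i γ a c * w c = 0
      rw [show collMat n i γ a c = 0 from collMat_a_other γ hii c h1 h2, zero_mul]
  · by_cases hji1 : j.val = i + 1
    · have hjb : j = b := Fin.ext hji1
      subst hjb
      rw [if_neg hji, if_pos hji1]
      rw [sum_two (fun k => collMat n i γ b k * w k) a b hab ?_]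
      · rw [show collMat n i γ b a = 1 + γ from collMat_ba γ hii hi,
          show collMat n i γ b b = -γ from collMat_bb γ hi]
        ring
      · intro c hca hcb
        have h1 : c.val ≠ i := fun h => hca (Fin.ext h)
        have h2 : c.val ≠ i + 1 := fun h => hcb (Fin.ext h)
        show collMat n i γ b c * w c = 0
        rw [show collMat n i γ b c = 0 from collMat_b_other γ hi c h1 h2, zero_mul]
    · rw [if_neg hji, if_neg hji1]
      have key : ∀ k : Fin n, collMat n i γ j k * w k = if k = j then w j else 0 := by
        intro k
        rw [collMat_other_row γ j k hji hji1]
        by_cases hkj : k = j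
        · subst hkj; simp
        · rw [if_neg (fun h => hkj h.symm), zero_mul, if_neg hkj]
      rw [Finset.sum_congr rfl (fun k _ => key k), Finset.sum_ite_eq' Finset.univ j (fun _ => w j)]
      simp

end collMatLemmas

/-- weighted total mass `∑ (j+1) m_j` -/
noncomputable def wS {n : ℕ} (m : Fin n → ℝ) : ℝ := ∑ j, ((j.val : ℝ) + 1) * m j

namespace AccumDatum

variable {n : ℕ} {m : Fin n → ℝ} (D : AccumDatum n m)

/-- weighted momentum at time t -/
noncomputable def cwt (t : ℝ) : ℝ := ∑ j, ((j.val : ℝ) + 1) * m j * D.v t j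

/-- weighted momentum left limit at collision k -/
noncomputable def cwm (k : ℕ) : ℝ := ∑ j, ((j.val : ℝ) + 1) * m j * D.vminus k j

/-- jump of the weighted momentum at collision k -/
noncomputable def J (k : ℕ) : ℝ := D.cwt (D.tc k) - D.cwm k

lemma hi_of_ty {k i : ℕ} (h : D.ty k = i + 1) : i + 1 < n := by
  have h1 := D.ty_le k
  have h2 := D.ha
  have h3 := D.hn
  omega

lemma J_eq (k : ℕ) :
    D.J k = ∑ j, ((j.val : ℝ) + 1) * m j * (D.v (D.tc k) j - D.vminus k j) := by
  simp only [J, cwt, cwm, ← Finset.sum_sub_distrib]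
  congr 1; funext j; ring

/-- the key jump estimate: each coordinate jump is controlled by the jump `J k ≥ 0`
of the weighted momentum. -/
lemma jump (k : ℕ) (j : Fin n) :
    |D.v (D.tc k) j - D.vminus k j| * m j ≤ D.J k := by
  rcases Nat.eq_zero_or_eq_succ_pred (D.ty k) with h0 | hsucc
  · -- floor collision
    obtain ⟨hq, hw, hv0, hvj⟩ := D.coll_floor k h0
    have hn0 : 0 < n := by have := D.hn; omega
    set z : Fin n := ⟨0, by omega⟩ with hz
    have hJ : D.J k = -2 * (m z * D.vminus k z) := by
      rw [J_eq]
      rw [Finset.sum_eq_single z]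
      · rw [hv0]; push_cast [hz]; ring
      · intro c _ hc
        rw [hvj c hc]; ring
      · intro hc; exact absurd (Finset.mem_univ z) hc
    have hmz := D.hm z
    have hJpos : 0 < D.J k := by rw [hJ]; nlinarith
    by_cases hjz : j = z
    · subst hjz
      rw [hv0, hJ]
      rw [show -D.vminus k z - D.vminus k z = -(2 * D.vminus k z) by ring, abs_neg,
        abs_of_nonpos (by linarith)]
      nlinarith
    · rw [hvj j hjz]
      simpa using le_of_lt hJpos
  · -- pair collision
    set i := (D.ty k).pred with hidef
    have hty : D.ty k = i + 1 := hsucc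
    have hi : i + 1 < n := D.hi_of_ty hty
    have hii : i < n := Nat.lt_of_succ_lt hi
    obtain ⟨hq, hgt, hv⟩ := D.coll_pair k i hi hty
    set a : Fin n := ⟨i, hii⟩ with hadef
    set b : Fin n := ⟨i + 1, hi⟩ with hbdef
    have hab : a ≠ b := by intro h; exact absurd (congrArg Fin.val h) (by simp [hadef, hbdef])
    set γ : ℝ := (m a - m b) / (m a + m b) with hγ
    set wa := D.vminus k a with hwa
    set wb := D.vminus k b with hwb
    have hr : 0 < wa - wb := sub_pos.mpr hgt
    have hma := D.hm a
    have hmb := D.hm b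
    have hmab : 0 < m a + m b := by linarith
    -- values of v after the collision
    have hva : D.v (D.tc k) a = γ * wa + (1 - γ) * wb := by
      rw [hv, collMat_mulVec γ hi (D.vminus k) a, if_pos rfl]
    have hvb : D.v (D.tc k) b = (1 + γ) * wa - γ * wb := by
      rw [hv, collMat_mulVec γ hi (D.vminus k) b]
      rw [if_neg (by simp [hbdef]), if_pos rfl]
    have hvc : ∀ c : Fin n, c ≠ a → c ≠ b → D.v (D.tc k) c = D.vminus k c := by
      intro c hca hcb
      rw [hv, collMat_mulVec γ hi (D.vminus k) c,
        if_neg (fun h => hca (Fin.ext h)), if_neg (fun h => hcb (Fin.ext h))]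
    -- the jump of the weighted momentum
    have hJ : D.J k = 2 * (m a * m b / (m a + m b)) * (wa - wb) := by
      rw [J_eq]
      rw [sum_two _ a b hab ?_]
      · rw [hva, hvb]
        have hca : ((a.val : ℝ)) = (i : ℝ) := by simp [hadef]
        have hcb : ((b.val : ℝ)) = (i : ℝ) + 1 := by push_cast [hbdef]; ring
        rw [hca, hcb, hγ]
        field_simp
        ring
      · intro c hca hcb
        rw [hvc c hca hcb]; ring
    have hJpos : 0 < D.J k := by
      rw [hJ]
      have : 0 < m a * m b / (m a + m b) := by positivity
      nlinarith
    by_cases hja : j = a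
    · subst hja
      rw [hva]
      have : γ * wa + (1 - γ) * wb - wa = -((2 * m b / (m a + m b)) * (wa - wb)) := by
        rw [hγ]; field_simp; ring
      rw [this, abs_neg, abs_of_nonneg (by positivity), hJ]
      apply le_of_eq
      field_simp
    · by_cases hjb : j = b
      · subst hjb
        rw [hvb]
        have : (1 + γ) * wa - γ * wb - wb = (2 * m a / (m a + m b)) * (wa - wb) := by
          rw [hγ]; field_simp; ring
        rw [this, abs_of_nonneg (by positivity), hJ]
        apply le_of_eq
        field_simp
      · rw [hvc j hja hjb]
        simpa using le_of_lt hJpos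

lemma J_nonneg (k : ℕ) : 0 ≤ D.J k := by
  have hn0 : 0 < n := by have := D.hn; omega
  have := D.jump k ⟨0, hn0⟩
  have h2 : 0 ≤ |D.v (D.tc k) ⟨0, hn0⟩ - D.vminus k ⟨0, hn0⟩| * m ⟨0, hn0⟩ :=
    mul_nonneg (abs_nonneg _) (D.hm _).le
  linarith

lemma wS_pos' (hn0 : 0 < n) (hm : ∀ j, 0 < m j) : 0 < wS m := by
  refine Finset.sum_pos ?_ ⟨⟨0, hn0⟩, Finset.mem_univ _⟩
  intro j _
  have := hm j
  positivity

lemma cwm_succ (k : ℕ) :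
    D.cwm (k + 1) = D.cwt (D.tc k) - wS m * (D.tc (k + 1) - D.tc k) := by
  simp only [cwm, cwt, wS]
  rw [Finset.sum_mul, ← Finset.sum_sub_distrib]
  congr 1; funext j
  rw [D.vminus_succ k j]
  ring

lemma sum_J (K : ℕ) :
    ∑ k ∈ Finset.range K, D.J k = D.cwm K - D.cwm 0 + wS m * (D.tc K - D.tc 0) := by
  induction K with
  | zero => simp
  | succ K ih =>
    rw [Finset.sum_range_succ, ih]
    have h1 : D.J K = D.cwt (D.tc K) - D.cwm K := rfl
    have h2 := D.cwm_succ K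
    ring_nf
    ring_nf at h2 ⊢
    linarith [h2]

lemma cwm_bdd (k : ℕ) : |D.cwm k| ≤ D.C * wS m := by
  refine le_trans (Finset.abs_sum_le_sum_abs _ _) ?_
  rw [wS, Finset.mul_sum]
  refine Finset.sum_le_sum ?_
  intro j _
  have hm := D.hm j
  have hc : (0:ℝ) ≤ (j.val : ℝ) + 1 := by positivity
  rw [abs_mul, abs_mul, abs_of_nonneg hc, abs_of_pos hm]
  calc ((j.val : ℝ) + 1) * m j * |D.vminus k j| ≤ ((j.val : ℝ) + 1) * m j * D.C := by
        refine mul_le_mul_of_nonneg_left (D.vminus_bdd k j) (by positivity)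
    _ = D.C * (((j.val : ℝ) + 1) * m j) := by ring

lemma J_summable : Summable D.J := by
  refine summable_of_sum_range_le (fun k => D.J_nonneg k) (c := 2 * (D.C * wS m) + wS m * D.t0) ?_
  intro K
  rw [D.sum_J K]
  have h1 := D.cwm_bdd K
  have h2 := D.cwm_bdd 0
  have h3 : D.tc K - D.tc 0 ≤ D.t0 := by
    have := D.tc_lt K
    have := D.tc_pos
    linarith
  have h4 : 0 < wS m := wS_pos' (by have := D.hn; omega) D.hm
  have h5 := abs_le.mp h1
  have h6 := abs_le.mp h2
  have h7 : wS m * (D.tc K - D.tc 0) ≤ wS m * D.t0 := mul_le_mul_of_nonneg_left h3 h4.le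
  linarith

end AccumDatum

namespace AccumDatum

variable {n : ℕ} {m : Fin n → ℝ} (D : AccumDatum n m)

lemma coll_bound {t : ℝ} (ht : t < D.t0) : ∃ K : ℕ, ∀ k, D.tc k ≤ t → k < K := by
  have h : ∀ᶠ k in atTop, t < D.tc k := D.tc_lim.eventually (eventually_gt_nhds ht)
  obtain ⟨K, hK⟩ := eventually_atTop.mp h
  exact ⟨K, fun k hk => by by_contra hc; exact absurd hk (not_le.mpr (hK k (not_lt.mp hc)))⟩

lemma v_incr (j : Fin n) : ∀ (N : ℕ) (I : Finset ℕ) (s t : ℝ), I.card ≤ N → 0 ≤ s → s ≤ t →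
    t < D.t0 → (∀ k, s < D.tc k → D.tc k ≤ t → k ∈ I) →
    |D.v t j - D.v s j| ≤ (t - s) + ∑ k ∈ I, |D.v (D.tc k) j - D.vminus k j| := by
  intro N
  induction N with
  | zero =>
    intro I s t hcard hs hst ht hsub
    have hI : I = ∅ := Finset.card_eq_zero.mp (Nat.le_zero.mp hcard)
    subst hI
    have hfree : ∀ k, D.tc k ≤ s ∨ t < D.tc k := by
      intro k
      rcases le_or_gt (D.tc k) s with h | h
      · exact Or.inl h
      · refine Or.inr ?_
        by_contra hc
        exact Finset.notMem_empty k (hsub k h (not_lt.mp hc))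
    rw [D.v_linear hs hst ht hfree j]
    rw [show D.v s j - (t - s) - D.v s j = -(t - s) by ring, abs_neg,
      abs_of_nonneg (by linarith)]
    simp
  | succ N ih =>
    intro I s t hcard hs hst ht hsub
    by_cases hP : ∃ k, s < D.tc k ∧ D.tc k ≤ t
    · set k0 := Nat.find hP with hk0def
      obtain ⟨hk0s, hk0t⟩ : s < D.tc k0 ∧ D.tc k0 ≤ t := Nat.find_spec hP
      have hmin : ∀ k, s < D.tc k → D.tc k ≤ t → k0 ≤ k := by
        intro k h1 h2
        exact Nat.find_min' hP ⟨h1, h2⟩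
      have hk0I : k0 ∈ I := hsub k0 hk0s hk0t
      -- left limit at collision k0
      have h1 : D.vminus k0 j = D.v s j - (D.tc k0 - s) := by
        refine D.vminus_eq hs hk0s ?_ j
        intro k'
        rcases le_or_gt (D.tc k') s with h | h
        · exact Or.inl h
        · refine Or.inr ?_
          rcases le_or_gt (D.tc k0) (D.tc k') with h2 | h2
          · exact h2
          · have : k' < k0 := by
              by_contra hc
              exact absurd (D.tc_mono.monotone (not_lt.mp hc)) (not_le.mpr h2)
            have := hmin k' h (le_trans h2.le hk0t)
            omega
      -- recursive bound on [tc k0, t]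
      have h2 : |D.v t j - D.v (D.tc k0) j| ≤ (t - D.tc k0) +
          ∑ k ∈ I.erase k0, |D.v (D.tc k) j - D.vminus k j| := by
        refine ih (I.erase k0) (D.tc k0) t ?_ (D.tc_nonneg k0) hk0t ht ?_
        · rw [Finset.card_erase_of_mem hk0I]
          omega
        · intro k hk1 hk2
          refine Finset.mem_erase.mpr ⟨?_, hsub k (lt_trans hk0s hk1) hk2⟩
          intro hc; subst hc; exact lt_irrefl _ hk1
      have hsum : ∑ k ∈ I, |D.v (D.tc k) j - D.vminus k j| =
          |D.v (D.tc k0) j - D.vminus k0 j| +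
          ∑ k ∈ I.erase k0, |D.v (D.tc k) j - D.vminus k j| :=
        (Finset.add_sum_erase I _ hk0I).symm
      have h3 : |D.v t j - D.v s j| ≤ |D.v t j - D.v (D.tc k0) j| +
          |D.v (D.tc k0) j - D.vminus k0 j| + |D.vminus k0 j - D.v s j| := by
        calc |D.v t j - D.v s j| = |(D.v t j - D.v (D.tc k0) j) +
              ((D.v (D.tc k0) j - D.vminus k0 j) + (D.vminus k0 j - D.v s j))| := by ring_nf
          _ ≤ _ := by
              refine le_trans (abs_add_le _ _) ?_
              have := abs_add_le (D.v (D.tc k0) j - D.vminus k0 j) (D.vminus k0 j - D.v s j)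
              linarith
      have h4 : |D.vminus k0 j - D.v s j| = D.tc k0 - s := by
        rw [h1]
        rw [show D.v s j - (D.tc k0 - s) - D.v s j = -(D.tc k0 - s) by ring, abs_neg,
          abs_of_nonneg (by linarith)]
      rw [hsum]
      linarith
    · push_neg at hP
      have hfree : ∀ k, D.tc k ≤ s ∨ t < D.tc k := by
        intro k
        rcases le_or_gt (D.tc k) s with h | h
        · exact Or.inl h
        · exact Or.inr (hP k h)
      rw [D.v_linear hs hst ht hfree j]
      have : ∀ k ∈ I, (0:ℝ) ≤ |D.v (D.tc k) j - D.vminus k j| := fun k _ => abs_nonneg _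
      have hsum := Finset.sum_nonneg this
      rw [show D.v s j - (t - s) - D.v s j = -(t - s) by ring, abs_neg,
        abs_of_nonneg (by linarith)]
      linarith

lemma tail_small {ε : ℝ} (hε : 0 < ε) :
    ∃ K : ℕ, ∀ I : Finset ℕ, (∀ k ∈ I, K < k) → ∑ k ∈ I, D.J k < ε := by
  have hv := D.J_summable.vanishing (e := Iio ε) (IsOpen.mem_nhds isOpen_Iio hε)
  obtain ⟨s0, hs0⟩ := hv
  refine ⟨s0.sup id, fun I hI => ?_⟩
  have hdisj : Disjoint I s0 := by
    rw [Finset.disjoint_left]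
    intro k hk hk2
    have h1 := hI k hk
    have h2 : k ≤ s0.sup id := Finset.le_sup (f := id) hk2
    omega
  exact hs0 I hdisj

lemma v_lim (j : Fin n) :
    ∃ L : ℝ, Tendsto (fun t => D.v t j) (nhdsWithin D.t0 (Iio D.t0)) (nhds L) := by
  set l := nhdsWithin D.t0 (Iio D.t0) with hl
  haveI : l.NeBot := nhdsLT_neBot _
  have hmj := D.hm j
  have hC : Cauchy (Filter.map (fun t => D.v t j) l) := by
    rw [Metric.cauchy_iff]
    refine ⟨Filter.map_neBot, ?_⟩
    intro ε hε
    obtain ⟨K, hK⟩ := D.tail_small (ε := ε / 4 * m j) (by positivity)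
    set b := max (D.tc K) (D.t0 - ε / 4) with hb
    have hbt : b < D.t0 := by
      rw [hb]
      refine max_lt (D.tc_lt K) (by linarith)
    refine ⟨(fun t => D.v t j) '' (Ioo b D.t0), ?_, ?_⟩
    · refine Filter.image_mem_map ?_
      exact Ioo_mem_nhdsLT_of_mem ⟨hbt, le_refl _⟩
    · rintro x ⟨u, hu, rfl⟩ y ⟨w, hw, rfl⟩
      -- wlog u ≤ w, prove the bound for ordered pairs
      have main : ∀ u w : ℝ, u ∈ Ioo b D.t0 → w ∈ Ioo b D.t0 → u ≤ w →
          |D.v w j - D.v u j| < ε := by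
        intro u w hu hw huw
        have hu0 : 0 ≤ u := le_trans (D.tc_nonneg K) (le_trans (le_max_left _ _) hu.1.le)
        obtain ⟨K', hK'⟩ := D.coll_bound hw.2
        have hfin : {k | u < D.tc k ∧ D.tc k ≤ w}.Finite := by
          refine Set.Finite.subset (Set.finite_lt_nat K') ?_
          intro k hk
          exact hK' k hk.2
        set I := hfin.toFinset with hI
        have hsub : ∀ k, u < D.tc k → D.tc k ≤ w → k ∈ I := by
          intro k h1 h2
          rw [hI, Set.Finite.mem_toFinset]
          exact ⟨h1, h2⟩
        have hKI : ∀ k ∈ I, K < k := by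
          intro k hk
          rw [hI, Set.Finite.mem_toFinset] at hk
          have : D.tc K < D.tc k := lt_of_le_of_lt (le_trans (le_max_left _ _) hu.1.le) hk.1
          exact D.tc_mono.lt_iff_lt.mp this
        have hIncr := D.v_incr j I.card I u w (le_refl _) hu0 huw hw.2 hsub
        have hsumle : ∑ k ∈ I, |D.v (D.tc k) j - D.vminus k j| ≤ (∑ k ∈ I, D.J k) / m j := by
          rw [Finset.sum_div]
          refine Finset.sum_le_sum ?_
          intro k _
          rw [le_div_iff₀ hmj]
          exact D.jump k j
        have hJsum : ∑ k ∈ I, D.J k < ε / 4 * m j := hK I hKI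
        have h5 : (∑ k ∈ I, D.J k) / m j < ε / 4 := by
          rw [div_lt_iff₀ hmj]
          exact hJsum
        have h6 : w - u < ε / 4 := by
          have h7 : D.t0 - ε / 4 ≤ b := le_max_right _ _
          have := hu.1
          have := hw.2
          linarith
        linarith
      rcases le_total u w with h | h
      · rw [Real.dist_eq, abs_sub_comm]
        exact main u w hu hw h
      · rw [Real.dist_eq]
        exact main w u hw hu h
  obtain ⟨L, hL⟩ := CompleteSpace.complete hC
  exact ⟨L, hL⟩

end AccumDatum

namespace AccumDatum

variable {n : ℕ} {m : Fin n → ℝ} (D : AccumDatum n m)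

lemma tc_tendsto : Tendsto D.tc atTop (nhdsWithin D.t0 (Iio D.t0)) :=
  tendsto_nhdsWithin_iff.mpr ⟨D.tc_lim, Filter.Eventually.of_forall (fun k => D.tc_lt k)⟩

lemma vtc_tendsto {j : Fin n} {L : ℝ}
    (h : Tendsto (fun t => D.v t j) (nhdsWithin D.t0 (Iio D.t0)) (nhds L)) :
    Tendsto (fun k => D.v (D.tc k) j) atTop (nhds L) :=
  h.comp D.tc_tendsto

lemma vminus_tendsto {j : Fin n} {L : ℝ}
    (h : Tendsto (fun t => D.v t j) (nhdsWithin D.t0 (Iio D.t0)) (nhds L)) :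
    Tendsto (fun k => D.vminus k j) atTop (nhds L) := by
  rw [← tendsto_add_atTop_iff_nat 1]
  have h1 : Tendsto (fun k => D.v (D.tc k) j - (D.tc (k + 1) - D.tc k)) atTop
      (nhds (L - (D.t0 - D.t0))) := by
    refine Tendsto.sub (D.vtc_tendsto h) (Tendsto.sub ?_ D.tc_lim)
    exact D.tc_lim.comp (tendsto_add_atTop_nat 1)
  rw [show L - (D.t0 - D.t0) = L by ring] at h1
  refine Tendsto.congr ?_ h1
  intro k
  exact (D.vminus_succ k j).symm

lemma floor_freq : ∃ᶠ k in atTop, D.ty k = 0 := by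
  refine frequently_atTop.mpr ?_
  intro K
  obtain ⟨k, hk1, hk2⟩ := D.ty_inf 0 (Nat.zero_le _) K
  exact ⟨k, hk1, hk2⟩

lemma pair_freq (i : ℕ) (h : i + 1 ≤ D.a) : ∃ᶠ k in atTop, D.ty k = i + 1 := by
  refine frequently_atTop.mpr ?_
  intro K
  obtain ⟨k, hk1, hk2⟩ := D.ty_inf (i + 1) h K
  exact ⟨k, hk1, hk2⟩

lemma L_zero {L : ℝ} {h0 : 0 < n}
    (h : Tendsto (fun t => D.v t ⟨0, h0⟩) (nhdsWithin D.t0 (Iio D.t0)) (nhds L)) : L = 0 := by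
  set z : Fin n := ⟨0, h0⟩
  have h1 : Tendsto (fun k => D.v (D.tc k) z + D.vminus k z) atTop (nhds (L + L)) :=
    (D.vtc_tendsto h).add (D.vminus_tendsto h)
  have h2 : ∃ᶠ k in atTop, D.v (D.tc k) z + D.vminus k z ∈ ({0} : Set ℝ) := by
    refine (D.floor_freq).mono ?_
    intro k hk
    obtain ⟨_, _, hv0, _⟩ := D.coll_floor k hk
    have : D.v (D.tc k) z = -D.vminus k z := hv0
    simp [this]
  have h3 := IsClosed.mem_of_frequently_of_tendsto isClosed_singleton h2 h1
  rw [Set.mem_singleton_iff] at h3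
  linarith

lemma L_eq_succ {i : ℕ} (hi : i + 1 < n) (hia : i + 1 ≤ D.a) {La Lb : ℝ}
    (hta : Tendsto (fun t => D.v t ⟨i, Nat.lt_of_succ_lt hi⟩)
      (nhdsWithin D.t0 (Iio D.t0)) (nhds La))
    (htb : Tendsto (fun t => D.v t ⟨i + 1, hi⟩) (nhdsWithin D.t0 (Iio D.t0)) (nhds Lb)) :
    La = Lb := by
  set a : Fin n := ⟨i, Nat.lt_of_succ_lt hi⟩
  set b : Fin n := ⟨i + 1, hi⟩
  have h1 : Tendsto (fun k => (D.v (D.tc k) a - D.v (D.tc k) b) +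
      (D.vminus k a - D.vminus k b)) atTop (nhds ((La - Lb) + (La - Lb))) :=
    ((D.vtc_tendsto hta).sub (D.vtc_tendsto htb)).add
      ((D.vminus_tendsto hta).sub (D.vminus_tendsto htb))
  have h2 : ∃ᶠ k in atTop, (D.v (D.tc k) a - D.v (D.tc k) b) +
      (D.vminus k a - D.vminus k b) ∈ ({0} : Set ℝ) := by
    refine (D.pair_freq i hia).mono ?_
    intro k hk
    obtain ⟨_, _, hv⟩ := D.coll_pair k i hi hk
    set γ : ℝ := (m a - m b) / (m a + m b)
    have hva : D.v (D.tc k) a = γ * D.vminus k a + (1 - γ) * D.vminus k b := by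
      rw [hv, collMat_mulVec γ hi (D.vminus k) a, if_pos rfl]
    have hvb : D.v (D.tc k) b = (1 + γ) * D.vminus k a - γ * D.vminus k b := by
      rw [hv, collMat_mulVec γ hi (D.vminus k) b]
      rw [if_neg (by simp [b]), if_pos rfl]
    rw [hva, hvb]
    simp only [Set.mem_singleton_iff]
    ring
  have h3 := IsClosed.mem_of_frequently_of_tendsto isClosed_singleton h2 h1
  rw [Set.mem_singleton_iff] at h3
  linarith

end AccumDatum

namespace AccumDatum

variable {n : ℕ} {m : Fin n → ℝ} (D : AccumDatum n m)

lemma q_lip_free {s t : ℝ} (hs : 0 ≤ s) (hst : s ≤ t) (ht : t < D.t0)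
    (hfree : ∀ k, ¬(s < D.tc k ∧ D.tc k < t)) (j : Fin n) :
    |D.q t j - D.q s j| ≤ D.C * (t - s) := by
  rcases eq_or_lt_of_le hst with rfl | hlt
  · simp
  have hC := D.C_pos
  -- inner estimate on [s', t'] ⊆ (s, t)
  have inner : ∀ s' t' : ℝ, s < s' → s' ≤ t' → t' < t →
      |D.q t' j - D.q s' j| ≤ D.C * (t' - s') := by
    intro s' t' h1 h2 h3
    have hs'0 : 0 ≤ s' := le_trans hs h1.le
    have hsub : Icc s' t' ⊆ Ico 0 D.t0 := by
      intro x hx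
      exact ⟨le_trans hs'0 hx.1, lt_of_le_of_lt hx.2 (lt_trans h3 ht)⟩
    have hcont : ContinuousOn (fun x => D.q x j) (Icc s' t') := (D.q_cont j).mono hsub
    have hderiv : ∀ x ∈ Ico s' t', HasDerivWithinAt (fun x => D.q x j) (D.v x j) (Ici x) x := by
      intro x hx
      have hx1 : s < x := lt_of_lt_of_le h1 hx.1
      have hx2 : x < t := lt_of_le_of_lt hx.2.le h3
      have hxt0 : x < D.t0 := lt_trans hx2 ht
      have hnc : x ∉ range D.tc := by
        rintro ⟨k, rfl⟩
        exact hfree k ⟨hx1, hx2⟩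
      have := D.q_deriv x (le_trans hs hx1.le) hxt0 hnc j
      refine (this.hasDerivAt ?_).hasDerivWithinAt
      have hmem : Ioo (0:ℝ) D.t0 ∈ nhds x :=
        IsOpen.mem_nhds isOpen_Ioo ⟨lt_of_le_of_lt hs hx1, hxt0⟩
      exact Filter.mem_of_superset hmem Ioo_subset_Ico_self
    have hbound : ∀ x ∈ Ico s' t', ‖D.v x j‖ ≤ D.C := by
      intro x hx
      have hx1 : s < x := lt_of_lt_of_le h1 hx.1
      have hx2 : x < t := lt_of_le_of_lt hx.2.le h3
      exact D.v_bdd x (le_trans hs hx1.le) (lt_trans hx2 ht) j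
    have := norm_image_sub_le_of_norm_deriv_right_le_segment hcont hderiv hbound t'
      ⟨h2, le_refl _⟩
    simpa [Real.norm_eq_abs] using this
  -- extend to the left endpoint s
  have step2 : ∀ t', s < t' → t' < t → |D.q t' j - D.q s j| ≤ D.C * (t' - s) := by
    intro t' h1 h2
    set F := nhdsWithin s (Ioo s t') with hF
    haveI : F.NeBot := by
      refine mem_closure_iff_nhdsWithin_neBot.mp ?_
      rw [closure_Ioo h1.ne]
      exact ⟨le_refl s, h1.le⟩
    have hq : Tendsto (fun s' => D.q s' j) F (nhds (D.q s j)) := by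
      have := (D.q_cont j) s ⟨hs, lt_trans hlt ht⟩
      refine this.mono_left (nhdsWithin_mono s ?_)
      intro x hx
      exact ⟨le_trans hs hx.1.le, lt_trans (lt_trans hx.2 h2) ht⟩
    have idt : Tendsto (fun s' : ℝ => s') F (nhds s) :=
      (continuous_id.tendsto s).mono_left nhdsWithin_le_nhds
    have hg : Tendsto (fun s' => D.C * (t' - s') - |D.q t' j - D.q s' j|) F
        (nhds (D.C * (t' - s) - |D.q t' j - D.q s j|)) :=
      (tendsto_const_nhds.mul (tendsto_const_nhds.sub idt)).sub
        ((tendsto_const_nhds.sub hq).abs)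
    have hev : ∀ᶠ s' in F, 0 ≤ D.C * (t' - s') - |D.q t' j - D.q s' j| := by
      filter_upwards [self_mem_nhdsWithin] with s' hs'
      have := inner s' t' hs'.1 hs'.2.le h2
      linarith
    have := ge_of_tendsto hg hev
    linarith
  -- extend to the right endpoint t
  set F := nhdsWithin t (Ioo s t) with hF
  haveI : F.NeBot := by
    refine mem_closure_iff_nhdsWithin_neBot.mp ?_
    rw [closure_Ioo hlt.ne]
    exact ⟨hlt.le, le_refl t⟩
  have hq : Tendsto (fun t' => D.q t' j) F (nhds (D.q t j)) := by
    have := (D.q_cont j) t ⟨le_trans hs hst, ht⟩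
    refine this.mono_left (nhdsWithin_mono t ?_)
    intro x hx
    exact ⟨le_trans hs hx.1.le, lt_trans hx.2 ht⟩
  have idt : Tendsto (fun t' : ℝ => t') F (nhds t) :=
    (continuous_id.tendsto t).mono_left nhdsWithin_le_nhds
  have hg : Tendsto (fun t' => D.C * (t' - s) - |D.q t' j - D.q s j|) F
      (nhds (D.C * (t - s) - |D.q t j - D.q s j|)) :=
    (tendsto_const_nhds.mul (idt.sub tendsto_const_nhds)).sub
      ((hq.sub tendsto_const_nhds).abs)
  have hev : ∀ᶠ t' in F, 0 ≤ D.C * (t' - s) - |D.q t' j - D.q s j| := by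
    filter_upwards [self_mem_nhdsWithin] with t' ht'
    have := step2 t' ht'.1 ht'.2
    linarith
  have := ge_of_tendsto hg hev
  linarith

lemma q_lip (j : Fin n) : ∀ (N : ℕ) (I : Finset ℕ) (s t : ℝ), I.card ≤ N → 0 ≤ s → s ≤ t →
    t < D.t0 → (∀ k, s < D.tc k → D.tc k ≤ t → k ∈ I) →
    |D.q t j - D.q s j| ≤ D.C * (t - s) := by
  intro N
  induction N with
  | zero =>
    intro I s t hcard hs hst ht hsub
    have hI : I = ∅ := Finset.card_eq_zero.mp (Nat.le_zero.mp hcard)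
    subst hI
    refine D.q_lip_free hs hst ht ?_ j
    intro k ⟨h1, h2⟩
    exact Finset.notMem_empty k (hsub k h1 h2.le)
  | succ N ih =>
    intro I s t hcard hs hst ht hsub
    by_cases hP : ∃ k, s < D.tc k ∧ D.tc k ≤ t
    · set k0 := Nat.find hP with hk0def
      obtain ⟨hk0s, hk0t⟩ : s < D.tc k0 ∧ D.tc k0 ≤ t := Nat.find_spec hP
      have hmin : ∀ k, s < D.tc k → D.tc k ≤ t → k0 ≤ k := by
        intro k h1 h2
        exact Nat.find_min' hP ⟨h1, h2⟩
      have hk0I : k0 ∈ I := hsub k0 hk0s hk0t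
      have piece1 : |D.q (D.tc k0) j - D.q s j| ≤ D.C * (D.tc k0 - s) := by
        refine D.q_lip_free hs hk0s.le (lt_of_le_of_lt hk0t ht) ?_ j
        intro k ⟨h1, h2⟩
        have h3 : D.tc k ≤ t := le_trans h2.le hk0t
        have := hmin k h1 h3
        have : D.tc k0 ≤ D.tc k := D.tc_mono.monotone this
        linarith
      have piece2 : |D.q t j - D.q (D.tc k0) j| ≤ D.C * (t - D.tc k0) := by
        refine ih (I.erase k0) (D.tc k0) t ?_ (D.tc_nonneg k0) hk0t ht ?_
        · rw [Finset.card_erase_of_mem hk0I]; omega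
        · intro k hk1 hk2
          refine Finset.mem_erase.mpr ⟨?_, hsub k (lt_trans hk0s hk1) hk2⟩
          intro hc; subst hc; exact lt_irrefl _ hk1
      calc |D.q t j - D.q s j| ≤ |D.q t j - D.q (D.tc k0) j| + |D.q (D.tc k0) j - D.q s j| := by
            have := abs_add_le (D.q t j - D.q (D.tc k0) j) (D.q (D.tc k0) j - D.q s j)
            rw [show D.q t j - D.q (D.tc k0) j + (D.q (D.tc k0) j - D.q s j) =
              D.q t j - D.q s j by ring] at this
            exact this
        _ ≤ D.C * (t - D.tc k0) + D.C * (D.tc k0 - s) := add_le_add piece2 piece1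
        _ = D.C * (t - s) := by ring
    · push_neg at hP
      refine D.q_lip_free hs hst ht ?_ j
      intro k ⟨h1, h2⟩
      exact absurd h2 (not_lt.mpr (hP k h1).le)

/-- global Lipschitz bound for positions -/
lemma q_lip' (j : Fin n) {s t : ℝ} (hs : 0 ≤ s) (hst : s ≤ t) (ht : t < D.t0) :
    |D.q t j - D.q s j| ≤ D.C * (t - s) := by
  obtain ⟨K', hK'⟩ := D.coll_bound ht
  have hfin : {k | s < D.tc k ∧ D.tc k ≤ t}.Finite := by
    refine Set.Finite.subset (Set.finite_lt_nat K') ?_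
    intro k hk
    exact hK' k hk.2
  refine D.q_lip j hfin.toFinset.card hfin.toFinset s t (le_refl _) hs hst ht ?_
  intro k h1 h2
  rw [Set.Finite.mem_toFinset]
  exact ⟨h1, h2⟩

lemma q_lim (j : Fin n) :
    ∃ Q : ℝ, Tendsto (fun t => D.q t j) (nhdsWithin D.t0 (Iio D.t0)) (nhds Q) := by
  set l := nhdsWithin D.t0 (Iio D.t0) with hl
  haveI : l.NeBot := nhdsLT_neBot _
  have hC := D.C_pos
  have hcau : Cauchy (Filter.map (fun t => D.q t j) l) := by
    rw [Metric.cauchy_iff]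
    refine ⟨Filter.map_neBot, ?_⟩
    intro ε hε
    set b := max 0 (D.t0 - ε / (2 * D.C)) with hb
    have hbt : b < D.t0 := by
      rw [hb]
      have h0 : 0 < ε / (2 * D.C) := by positivity
      exact max_lt D.t0_pos (by linarith)
    refine ⟨(fun t => D.q t j) '' (Ioo b D.t0), ?_, ?_⟩
    · exact Filter.image_mem_map (Ioo_mem_nhdsLT_of_mem ⟨hbt, le_refl _⟩)
    · have main : ∀ u w : ℝ, u ∈ Ioo b D.t0 → w ∈ Ioo b D.t0 → u ≤ w →
          |D.q w j - D.q u j| < ε := by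
        intro u w hu hw huw
        have hu0 : 0 ≤ u := le_trans (le_max_left _ _) hu.1.le
        have h1 := D.q_lip' j hu0 huw hw.2
        have h2 : w - u < ε / (2 * D.C) := by
          have h3 : D.t0 - ε / (2 * D.C) ≤ b := le_max_right _ _
          have := hu.1
          have := hw.2
          linarith
        calc |D.q w j - D.q u j| ≤ D.C * (w - u) := h1
          _ < D.C * (ε / (2 * D.C)) := by
              exact mul_lt_mul_of_pos_left h2 hC
          _ = ε / 2 := by field_simp
          _ < ε := by linarith
      rintro x ⟨u, hu, rfl⟩ y ⟨w, hw, rfl⟩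
      rcases le_total u w with h | h
      · rw [Real.dist_eq, abs_sub_comm]
        exact main u w hu hw h
      · rw [Real.dist_eq]
        exact main w u hw hu h
  obtain ⟨Q, hQ⟩ := CompleteSpace.complete hcau
  exact ⟨Q, hQ⟩

lemma qtc_tendsto {j : Fin n} {Q : ℝ}
    (h : Tendsto (fun t => D.q t j) (nhdsWithin D.t0 (Iio D.t0)) (nhds Q)) :
    Tendsto (fun k => D.q (D.tc k) j) atTop (nhds Q) :=
  h.comp D.tc_tendsto

lemma Q_zero {Q : ℝ} {h0 : 0 < n}
    (h : Tendsto (fun t => D.q t ⟨0, h0⟩) (nhdsWithin D.t0 (Iio D.t0)) (nhds Q)) : Q = 0 := by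
  have h1 := D.qtc_tendsto h
  have h2 : ∃ᶠ k in atTop, D.q (D.tc k) ⟨0, h0⟩ ∈ ({0} : Set ℝ) := by
    refine (D.floor_freq).mono ?_
    intro k hk
    obtain ⟨hq0, _, _, _⟩ := D.coll_floor k hk
    exact hq0
  have h3 := IsClosed.mem_of_frequently_of_tendsto isClosed_singleton h2 h1
  rwa [Set.mem_singleton_iff] at h3

lemma Q_eq_succ {i : ℕ} (hi : i + 1 < n) (hia : i + 1 ≤ D.a) {Qa Qb : ℝ}
    (hta : Tendsto (fun t => D.q t ⟨i, Nat.lt_of_succ_lt hi⟩)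
      (nhdsWithin D.t0 (Iio D.t0)) (nhds Qa))
    (htb : Tendsto (fun t => D.q t ⟨i + 1, hi⟩) (nhdsWithin D.t0 (Iio D.t0)) (nhds Qb)) :
    Qa = Qb := by
  have h1 : Tendsto (fun k => D.q (D.tc k) ⟨i, Nat.lt_of_succ_lt hi⟩ -
      D.q (D.tc k) ⟨i + 1, hi⟩) atTop (nhds (Qa - Qb)) :=
    (D.qtc_tendsto hta).sub (D.qtc_tendsto htb)
  have h2 : ∃ᶠ k in atTop, D.q (D.tc k) ⟨i, Nat.lt_of_succ_lt hi⟩ -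
      D.q (D.tc k) ⟨i + 1, hi⟩ ∈ ({0} : Set ℝ) := by
    refine (D.pair_freq i hia).mono ?_
    intro k hk
    obtain ⟨hq, _, _⟩ := D.coll_pair k i hi hk
    simp [hq]
  have h3 := IsClosed.mem_of_frequently_of_tendsto isClosed_singleton h2 h1
  rw [Set.mem_singleton_iff] at h3
  linarith

end AccumDatum

/-- given an accumulating collision datum, for every (0-based) particle
index `i ≤ a` one has `lim_{t → t₀⁻} v_i(t) = 0` and `lim_{t → t₀⁻} q_i(t) = 0`. -/
theorem accum_velocity_position_limit_zero (n : ℕ) (m : Fin n → ℝ) (D : AccumDatum n m) :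
    ∀ i : ℕ, ∀ hi : i < n, i ≤ D.a →
      Tendsto (fun t => D.v t ⟨i, hi⟩) (nhdsWithin D.t0 (Iio D.t0)) (nhds 0) ∧
      Tendsto (fun t => D.q t ⟨i, hi⟩) (nhdsWithin D.t0 (Iio D.t0)) (nhds 0) := by
  choose L hL using D.v_lim
  choose Q hQ using D.q_lim
  have key : ∀ i : ℕ, ∀ hi : i < n, i ≤ D.a → L ⟨i, hi⟩ = 0 ∧ Q ⟨i, hi⟩ = 0 := by
    intro i
    induction i with
    | zero =>
      intro hi _
      exact ⟨D.L_zero (hL ⟨0, hi⟩), D.Q_zero (hQ ⟨0, hi⟩)⟩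
    | succ i ih =>
      intro hi hia
      have hii : i < n := Nat.lt_of_succ_lt hi
      have hia' : i ≤ D.a := le_trans (Nat.le_succ i) hia
      obtain ⟨hLi, hQi⟩ := ih hii hia'
      constructor
      · have h := D.L_eq_succ hi hia (hL ⟨i, Nat.lt_of_succ_lt hi⟩) (hL ⟨i + 1, hi⟩)
        rw [← h]
        exact hLi
      · have h := D.Q_eq_succ hi hia (hQ ⟨i, Nat.lt_of_succ_lt hi⟩) (hQ ⟨i + 1, hi⟩)
        rw [← h]
        exact hQi
  intro i hi hia
  obtain ⟨hL0, hQ0⟩ := key i hi hia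
  exact ⟨hL0 ▸ hL ⟨i, hi⟩, hQ0 ▸ hQ ⟨i, hi⟩⟩
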